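/- arXiv:2203.11995 — 2 statements merged into one kernel-verified Lean document; each statement's English description precedes it below -/
import Mathlib

section
/- For every bounded operator T on H there exists a Hilbert (orthonormal) basis (f_n)_{n≥1} of H such that (#{(i,j) : 1 ≤ i,j ≤ N, ⟨f_i, T f_j⟩ ≠ 0})/N² → 0 as N → ∞; that is, every bounded operator has an orthonormal basis in which its matrix has support density 0. -/
open Filter

section Aux

open Submodule Set

open scoped Classical

variable {H : Type*} [NormedAddCommGroup H] [InnerProductSpace ℂ H] [CompleteSpace H]

/-- `n` is a perfect square. -/
def SqP (n : ℕ) : Prop := ∃ k : ℕ, n = k * k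

lemma exists_unit_perp (hinf : ¬ FiniteDimensional ℂ H) (A : Set H) (hA : A.Finite) :
    ∃ x : H, ‖x‖ = 1 ∧ ∀ a ∈ A, (inner ℂ a x : ℂ) = 0 := by
  have hK : FiniteDimensional ℂ (span ℂ A) := FiniteDimensional.span_of_finite ℂ hA
  have hne : (span ℂ A)ᗮ ≠ ⊥ := by
    intro hbot
    have htop : span ℂ A = ⊤ := Submodule.orthogonal_eq_bot_iff.mp hbot
    apply hinf
    rw [htop] at hK
    exact (Submodule.topEquiv (R := ℂ) (M := H)).finiteDimensional
  obtain ⟨x0, hx0m, hx0⟩ := (Submodule.ne_bot_iff _).mp hne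
  refine ⟨((‖x0‖ : ℂ))⁻¹ • x0, norm_smul_inv_norm hx0, fun a ha => ?_⟩
  have hxm : ((‖x0‖ : ℂ))⁻¹ • x0 ∈ (span ℂ A)ᗮ := Submodule.smul_mem _ _ hx0m
  exact ((Submodule.mem_orthogonal _ _).mp hxm) a (Submodule.subset_span ha)

lemma exists_unit_perp_total (hinf : ¬ FiniteDimensional ℂ H) (A : Set H) (hA : A.Finite)
    (u : H) :
    ∃ x : H, ‖x‖ = 1 ∧ (∀ a ∈ A, (inner ℂ a x : ℂ) = 0) ∧
      u ∈ span ℂ (insert x A) := by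
  have hK : FiniteDimensional ℂ (span ℂ A) := FiniteDimensional.span_of_finite ℂ hA
  set K := span ℂ A with hKdef
  set w := u - (orthogonalProjection K u : H) with hw
  have hwmem : w ∈ Kᗮ := K.sub_starProjection_mem_orthogonal u
  by_cases hw0 : w = 0
  · obtain ⟨x, hx1, hx2⟩ := exists_unit_perp hinf A hA
    refine ⟨x, hx1, hx2, ?_⟩
    have hu : u = (orthogonalProjection K u : H) := by
      have := sub_eq_zero.mp hw0; exact this
    rw [hu]
    exact span_mono (Set.subset_insert _ _) (SetLike.coe_mem (orthogonalProjection K u))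
  · refine ⟨((‖w‖ : ℂ))⁻¹ • w, norm_smul_inv_norm hw0, fun a ha => ?_, ?_⟩
    · have hxm : ((‖w‖ : ℂ))⁻¹ • w ∈ Kᗮ := Submodule.smul_mem _ _ hwmem
      exact ((Submodule.mem_orthogonal _ _).mp hxm) a (Submodule.subset_span ha)
    · have hu : u = (orthogonalProjection K u : H) + w := by rw [hw]; abel
      rw [hu]
      refine Submodule.add_mem _ ?_ ?_
      · exact span_mono (Set.subset_insert _ _) (SetLike.coe_mem (orthogonalProjection K u))
      · have hnz : ((‖w‖ : ℂ)) ≠ 0 := by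
          simpa using norm_ne_zero_iff.mpr hw0
        have hm : ((‖w‖ : ℂ)) • (((‖w‖ : ℂ))⁻¹ • w) ∈ span ℂ (insert (((‖w‖ : ℂ))⁻¹ • w) A) :=
          Submodule.smul_mem _ _ (Submodule.subset_span (Set.mem_insert _ _))
        rwa [smul_inv_smul₀ hnz] at hm

/-- One step of the construction. -/
noncomputable def stepChoose (hinf : ¬ FiniteDimensional ℂ H) (T : H →L[ℂ] H) (e : ℕ → H)
    (n : ℕ) (g : ℕ → H) : H :=
  if SqP n then
    Classical.choose (exists_unit_perp_total hinf (g '' Set.Iio n)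
      ((Set.finite_Iio n).image g) (e (Nat.sqrt n)))
  else
    Classical.choose (exists_unit_perp hinf
      ((g '' Set.Iio n) ∪ (((fun m => T (g m)) '' Set.Iio n) ∪
        ((fun m => (ContinuousLinearMap.adjoint T) (g m)) '' Set.Iio n)))
      (((Set.finite_Iio n).image g).union ((((Set.finite_Iio n).image _)).union
        (((Set.finite_Iio n).image _)))))

/-- The orthonormal sequence. -/
noncomputable def bv (hinf : ¬ FiniteDimensional ℂ H) (T : H →L[ℂ] H) (e : ℕ → H) : ℕ → H
  | n => stepChoose hinf T e n (fun m => if h : m < n then bv hinf T e m else 0)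
  termination_by n => n
  decreasing_by exact h

lemma bv_spec (hinf : ¬ FiniteDimensional ℂ H) (T : H →L[ℂ] H) (e : ℕ → H) (n : ℕ) :
    ‖bv hinf T e n‖ = 1 ∧
    (∀ m, m < n → (inner ℂ (bv hinf T e m) (bv hinf T e n) : ℂ) = 0) ∧
    (SqP n → e (Nat.sqrt n) ∈
      span ℂ (insert (bv hinf T e n) (bv hinf T e '' Set.Iio n))) ∧
    (¬ SqP n → ∀ m, m < n →
      (inner ℂ (T (bv hinf T e m)) (bv hinf T e n) : ℂ) = 0 ∧
      (inner ℂ ((ContinuousLinearMap.adjoint T) (bv hinf T e m)) (bv hinf T e n) : ℂ) = 0) := by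
  have heq : bv hinf T e n
      = stepChoose hinf T e n (fun m => if h : m < n then bv hinf T e m else 0) := by
    rw [bv]
  set g : ℕ → H := fun m => if h : m < n then bv hinf T e m else 0 with hgdef
  have hgm : ∀ m, m < n → g m = bv hinf T e m := fun m h => dif_pos h
  have himg : g '' Set.Iio n = bv hinf T e '' Set.Iio n :=
    Set.image_congr fun m hm => hgm m hm
  by_cases hs : SqP n
  · have hx := Classical.choose_spec (exists_unit_perp_total hinf (g '' Set.Iio n)
      ((Set.finite_Iio n).image g) (e (Nat.sqrt n)))
    have hxv : bv hinf T e n = Classical.choose (exists_unit_perp_total hinf (g '' Set.Iio n)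
        ((Set.finite_Iio n).image g) (e (Nat.sqrt n))) := by
      rw [heq, stepChoose, if_pos hs]
    rw [← hxv] at hx
    refine ⟨hx.1, fun m hm => ?_, fun _ => ?_, fun hns => absurd hs hns⟩
    · exact hx.2.1 _ ⟨m, hm, hgm m hm⟩
    · have := hx.2.2
      rwa [himg] at this
  · have hx := Classical.choose_spec (exists_unit_perp hinf
      ((g '' Set.Iio n) ∪ (((fun m => T (g m)) '' Set.Iio n) ∪
        ((fun m => (ContinuousLinearMap.adjoint T) (g m)) '' Set.Iio n)))
      (((Set.finite_Iio n).image g).union ((((Set.finite_Iio n).image _)).union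
        (((Set.finite_Iio n).image _)))))
    have hxv : bv hinf T e n = Classical.choose (exists_unit_perp hinf
        ((g '' Set.Iio n) ∪ (((fun m => T (g m)) '' Set.Iio n) ∪
          ((fun m => (ContinuousLinearMap.adjoint T) (g m)) '' Set.Iio n)))
        (((Set.finite_Iio n).image g).union ((((Set.finite_Iio n).image _)).union
          (((Set.finite_Iio n).image _))))) := by
      rw [heq, stepChoose, if_neg hs]
    rw [← hxv] at hx
    refine ⟨hx.1, fun m hm => ?_, fun h => absurd h hs, fun _ m hm => ⟨?_, ?_⟩⟩
    · exact hx.2 _ (Or.inl ⟨m, hm, hgm m hm⟩)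
    · exact hx.2 _ (Or.inr (Or.inl ⟨m, hm, by show T (g m) = _; rw [hgm m hm]⟩))
    · exact hx.2 _ (Or.inr (Or.inr ⟨m, hm,
        by show (ContinuousLinearMap.adjoint T) (g m) = _; rw [hgm m hm]⟩))

end Aux

/-- Every bounded operator `T` on a separable infinite-dimensional complex
Hilbert space admits an orthonormal basis `(f n)_{n ≥ 1}` relative to which its matrix
`(⟪f i, T (f j)⟫)` has support density `0`. -/
theorem exists_basis_density_zero
    {H : Type*} [NormedAddCommGroup H] [InnerProductSpace ℂ H] [CompleteSpace H]
    [TopologicalSpace.SeparableSpace H] (hinf : ¬ FiniteDimensional ℂ H)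
    (T : H →L[ℂ] H) :
    ∃ f : HilbertBasis ℕ+ ℂ H,
      Tendsto (fun N : ℕ =>
        ((Set.ncard {p : ℕ+ × ℕ+ | (p.1 : ℕ) ≤ N ∧ (p.2 : ℕ) ≤ N ∧
            (inner ℂ (f p.1) (T (f p.2)) : ℂ) ≠ 0}) : ℝ) / (N : ℝ) ^ 2)
      atTop (nhds 0) := by
  classical
  obtain ⟨e, he⟩ := TopologicalSpace.exists_dense_seq H
  set v : ℕ → H := bv hinf T e with hv
  -- orthonormality
  have hnorm : ∀ n, ‖v n‖ = 1 := fun n => (bv_spec hinf T e n).1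
  have horth : ∀ m n, m < n → (inner ℂ (v m) (v n) : ℂ) = 0 :=
    fun m n h => (bv_spec hinf T e n).2.1 m h
  have hon : Orthonormal ℂ v := by
    constructor
    · exact hnorm
    · intro i j hij
      rcases lt_or_gt_of_ne hij with h | h
      · exact horth i j h
      · exact inner_eq_zero_symm.mpr (horth j i h)
  -- totality
  have hdense : ∀ k, e k ∈ Submodule.span ℂ (Set.range v) := by
    intro k
    have hsq : SqP (k * k) := ⟨k, rfl⟩
    have h := (bv_spec hinf T e (k * k)).2.2.1 hsq
    have hk : Nat.sqrt (k * k) = k := by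
      rw [← pow_two, Nat.sqrt_eq']
    rw [hk] at h
    refine Submodule.span_mono ?_ h
    rw [Set.insert_subset_iff]
    exact ⟨Set.mem_range_self _, (Set.image_subset_range _ _)⟩
  have hsp : ⊤ ≤ (Submodule.span ℂ (Set.range v)).topologicalClosure := by
    have hsub : Set.range e ⊆ ((Submodule.span ℂ (Set.range v) : Submodule ℂ H) : Set H) := by
      rintro _ ⟨k, rfl⟩; exact hdense k
    have hd : Dense ((Submodule.span ℂ (Set.range v) : Submodule ℂ H) : Set H) :=
      Dense.mono hsub he
    exact (Submodule.dense_iff_topologicalClosure_eq_top.mp hd).ge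
  -- zero entries
  have hzero : ∀ i j : ℕ, i ≠ j → ¬ SqP i → ¬ SqP j → (inner ℂ (v i) (T (v j)) : ℂ) = 0 := by
    intro i j hij hsi hsj
    rcases lt_or_gt_of_ne hij with h | h
    · have := ((bv_spec hinf T e j).2.2.2 hsj i h).2
      rwa [ContinuousLinearMap.adjoint_inner_left] at this
    · have := ((bv_spec hinf T e i).2.2.2 hsi j h).1
      exact inner_eq_zero_symm.mpr this
  -- the basis, indexed by ℕ+
  set v' : ℕ+ → H := fun p => v p.natPred with hv'
  have hon' : Orthonormal ℂ v' := hon.comp _ PNat.natPred_injective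
  have hrange : Set.range v' = Set.range v := by
    have hsurj : Function.Surjective PNat.natPred := fun n => ⟨n.succPNat, Nat.natPred_succPNat n⟩
    exact Function.Surjective.range_comp hsurj v
  have hsp' : ⊤ ≤ (Submodule.span ℂ (Set.range v')).topologicalClosure := by
    rw [hrange]; exact hsp
  refine ⟨HilbertBasis.mk hon' hsp', ?_⟩
  set f := HilbertBasis.mk hon' hsp' with hf
  have hfv : ∀ p : ℕ+, f p = v p.natPred := by
    intro p
    have : ⇑f = v' := HilbertBasis.coe_mk hon' hsp'
    rw [this]
  -- counting
  set cnt : ℕ → ℕ := fun N => Set.ncard {p : ℕ+ × ℕ+ | (p.1 : ℕ) ≤ N ∧ (p.2 : ℕ) ≤ N ∧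
      (inner ℂ (f p.1) (T (f p.2)) : ℂ) ≠ 0} with hcnt
  have hbound : ∀ N : ℕ, cnt N ≤ N + ((Nat.sqrt N + 1) * N + N * (Nat.sqrt N + 1)) := by
    intro N
    set S : Set (ℕ+ × ℕ+) := {p : ℕ+ × ℕ+ | (p.1 : ℕ) ≤ N ∧ (p.2 : ℕ) ≤ N ∧
      (inner ℂ (f p.1) (T (f p.2)) : ℂ) ≠ 0} with hS
    set mfun : ℕ+ × ℕ+ → ℕ × ℕ := fun p => (p.1.natPred, p.2.natPred) with hmfun
    have hminj : Function.Injective mfun := by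
      intro p q h
      rw [Prod.ext_iff] at h ⊢
      exact ⟨PNat.natPred_inj.mp h.1, PNat.natPred_inj.mp h.2⟩
    set G : Finset (ℕ × ℕ) := (Finset.range N ×ˢ Finset.range N).filter
      (fun q => q.1 = q.2 ∨ SqP q.1 ∨ SqP q.2) with hG
    have hsub : mfun '' S ⊆ (G : Set (ℕ × ℕ)) := by
      rintro _ ⟨p, hp, rfl⟩
      obtain ⟨h1, h2, h3⟩ := hp
      have hp1 : p.1.natPred < N := by
        have := p.1.natPred_add_one
        omega
      have hp2 : p.2.natPred < N := by
        have := p.2.natPred_add_one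
        omega
      simp only [G, Finset.coe_filter, Set.mem_setOf_eq, Finset.mem_product,
        Finset.mem_range]
      refine ⟨⟨hp1, hp2⟩, ?_⟩
      by_contra hcon
      push_neg at hcon
      obtain ⟨hne, hs1, hs2⟩ := hcon
      apply h3
      rw [hfv, hfv]
      exact hzero _ _ hne hs1 hs2
    have h1 : cnt N = (mfun '' S).ncard := (Set.ncard_image_of_injective S hminj).symm
    have h2 : (mfun '' S).ncard ≤ G.card := by
      rw [← Set.ncard_coe_finset]
      exact Set.ncard_le_ncard hsub G.finite_toSet
    -- bound the card of G
    have hGsplit : G ⊆ ((Finset.range N ×ˢ Finset.range N).filter (fun q => q.1 = q.2)) ∪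
        (((Finset.range N ×ˢ Finset.range N).filter (fun q => SqP q.1)) ∪
         ((Finset.range N ×ˢ Finset.range N).filter (fun q => SqP q.2))) := by
      intro q hq
      rw [Finset.mem_filter] at hq
      rcases hq.2 with h | h | h
      · exact Finset.mem_union_left _ (Finset.mem_filter.mpr ⟨hq.1, h⟩)
      · exact Finset.mem_union_right _ (Finset.mem_union_left _ (Finset.mem_filter.mpr ⟨hq.1, h⟩))
      · exact Finset.mem_union_right _ (Finset.mem_union_right _ (Finset.mem_filter.mpr ⟨hq.1, h⟩))
    have hsqcard : ((Finset.range N).filter SqP).card ≤ Nat.sqrt N + 1 := by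
      have : ((Finset.range N).filter SqP).card ≤ (Finset.range (Nat.sqrt N + 1)).card := by
        apply Finset.card_le_card_of_injOn Nat.sqrt
        · intro q hq
          rw [Finset.mem_coe, Finset.mem_filter, Finset.mem_range] at hq
          rw [Finset.mem_coe, Finset.mem_range]
          exact Nat.lt_succ_of_le (Nat.sqrt_le_sqrt hq.1.le)
        · intro q hq q' hq' hqq
          simp only [Finset.coe_filter, Set.mem_setOf_eq, Finset.mem_range] at hq hq'
          obtain ⟨a, rfl⟩ := hq.2
          obtain ⟨b, rfl⟩ := hq'.2
          have ha : Nat.sqrt (a * a) = a := by rw [← pow_two, Nat.sqrt_eq']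
          have hb : Nat.sqrt (b * b) = b := by rw [← pow_two, Nat.sqrt_eq']
          rw [ha, hb] at hqq
          rw [hqq]
      simpa using this
    have hd : ((Finset.range N ×ˢ Finset.range N).filter (fun q : ℕ × ℕ => q.1 = q.2)).card
        ≤ N := by
      have : ((Finset.range N ×ˢ Finset.range N).filter (fun q : ℕ × ℕ => q.1 = q.2)).card
          ≤ (Finset.range N).card := by
        apply Finset.card_le_card_of_injOn Prod.fst
        · intro q hq
          rw [Finset.mem_coe, Finset.mem_filter, Finset.mem_product] at hq
          exact hq.1.1
        · intro q hq q' hq' hqq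
          simp only [Finset.coe_filter, Set.mem_setOf_eq] at hq hq'
          exact Prod.ext hqq (by rw [← hq.2, ← hq'.2, hqq])
      simpa using this
    have hc1 : ((Finset.range N ×ˢ Finset.range N).filter (fun q : ℕ × ℕ => SqP q.1)).card
        ≤ (Nat.sqrt N + 1) * N := by
      have hsb : ((Finset.range N ×ˢ Finset.range N).filter (fun q : ℕ × ℕ => SqP q.1))
          ⊆ ((Finset.range N).filter SqP) ×ˢ Finset.range N := by
        intro q hq
        rw [Finset.mem_filter, Finset.mem_product] at hq
        rw [Finset.mem_product, Finset.mem_filter]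
        exact ⟨⟨hq.1.1, hq.2⟩, hq.1.2⟩
      calc ((Finset.range N ×ˢ Finset.range N).filter (fun q : ℕ × ℕ => SqP q.1)).card
          ≤ (((Finset.range N).filter SqP) ×ˢ Finset.range N).card := Finset.card_le_card hsb
        _ = ((Finset.range N).filter SqP).card * N := by rw [Finset.card_product, Finset.card_range]
        _ ≤ (Nat.sqrt N + 1) * N := Nat.mul_le_mul_right _ hsqcard
    have hc2 : ((Finset.range N ×ˢ Finset.range N).filter (fun q : ℕ × ℕ => SqP q.2)).card
        ≤ N * (Nat.sqrt N + 1) := by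
      have hsb : ((Finset.range N ×ˢ Finset.range N).filter (fun q : ℕ × ℕ => SqP q.2))
          ⊆ Finset.range N ×ˢ ((Finset.range N).filter SqP) := by
        intro q hq
        rw [Finset.mem_filter, Finset.mem_product] at hq
        rw [Finset.mem_product, Finset.mem_filter]
        exact ⟨hq.1.1, ⟨hq.1.2, hq.2⟩⟩
      calc ((Finset.range N ×ˢ Finset.range N).filter (fun q : ℕ × ℕ => SqP q.2)).card
          ≤ (Finset.range N ×ˢ ((Finset.range N).filter SqP)).card := Finset.card_le_card hsb
        _ = N * ((Finset.range N).filter SqP).card := by rw [Finset.card_product, Finset.card_range]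
        _ ≤ N * (Nat.sqrt N + 1) := Nat.mul_le_mul_left _ hsqcard
    have hGcard : G.card ≤ N + ((Nat.sqrt N + 1) * N + N * (Nat.sqrt N + 1)) := by
      calc G.card ≤ _ := Finset.card_le_card hGsplit
        _ ≤ _ + _ := Finset.card_union_le _ _
        _ ≤ N + ((Nat.sqrt N + 1) * N + N * (Nat.sqrt N + 1)) := by
            refine Nat.add_le_add hd ?_
            calc _ ≤ _ + _ := Finset.card_union_le _ _
              _ ≤ _ := Nat.add_le_add hc1 hc2
    omega
  -- analysis: the squeeze
  have hsqrt_tendsto : Tendsto (fun N : ℕ => Real.sqrt N) atTop atTop := by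
    refine tendsto_atTop_atTop.mpr fun b => ⟨⌈b⌉₊ * ⌈b⌉₊, fun n hn => ?_⟩
    calc b ≤ (⌈b⌉₊ : ℝ) := Nat.le_ceil b
      _ = Real.sqrt ((⌈b⌉₊ : ℝ) * (⌈b⌉₊ : ℝ)) := (Real.sqrt_mul_self (by positivity)).symm
      _ ≤ Real.sqrt n := Real.sqrt_le_sqrt (by exact_mod_cast hn)
  have hupper : Tendsto (fun N : ℕ => 5 / Real.sqrt N) atTop (nhds 0) := by
    have h0 : Tendsto (fun N : ℕ => (Real.sqrt N)⁻¹) atTop (nhds 0) :=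
      hsqrt_tendsto.inv_tendsto_atTop
    simpa only [mul_zero, div_eq_mul_inv] using h0.const_mul (5 : ℝ)
  refine tendsto_of_tendsto_of_tendsto_of_le_of_le' tendsto_const_nhds hupper ?_ ?_
  · filter_upwards with N
    positivity
  · filter_upwards [eventually_ge_atTop 1] with N hN
    have hNR : (1 : ℝ) ≤ (N : ℝ) := by exact_mod_cast hN
    have hsq1 : 1 ≤ Nat.sqrt N := by
      rw [Nat.one_le_iff_ne_zero]
      intro h
      have := Nat.sqrt_eq_zero.mp h
      omega
    have hcnt5 : cnt N ≤ 5 * (N * Nat.sqrt N) := by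
      have := hbound N
      nlinarith [hsq1, this]
    have hns : (Nat.sqrt N : ℝ) ≤ Real.sqrt N := by
      apply (Real.le_sqrt (by positivity) (by positivity)).mpr
      exact_mod_cast Nat.sqrt_le' N
    have hsN : (0:ℝ) < Real.sqrt N := by
      have : (0:ℝ) < (N:ℝ) := by linarith
      exact Real.sqrt_pos.mpr this
    have hNN : Real.sqrt N * Real.sqrt N = (N : ℝ) := Real.mul_self_sqrt (by linarith)
    rw [div_le_div_iff₀ (by positivity) hsN]
    have hcR : (cnt N : ℝ) ≤ 5 * ((N : ℝ) * (Nat.sqrt N : ℝ)) := by exact_mod_cast hcnt5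
    nlinarith [hcR, hns, hNN, hsN.le, hNR]
end

section
/- For a bounded operator W on H and n ≥ 1, let s_n(W) = inf{ ‖W − F‖ : F a bounded operator on H whose range is finite-dimensional of dimension < n } denote the n-th s-number of W. Let k ≥ 1 and let C_1, …, C_k and Z_1, …, Z_k be compact operators on H, and set T = ∑_{i=1}^k C_i∘Z_i. Then for every m ≥ 1, s_m(T) ≤ ∑_{i=1}^k s_{⌈m/(2k)⌉}(C_i)·s_{⌈m/(2k)⌉}(Z_i). In particular, if T = C∘Z − Z∘C for compact operators C, Z, then s_m(T) ≤ 2·s_{⌈m/4⌉}(C)·s_{⌈m/4⌉}(Z) for every m ≥ 1. -/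
/-- The `n`-th s-number of a bounded operator `W`:
`s n (W) = inf {‖W - F‖ : F bounded with finite-dimensional range of dimension < n}`. -/
noncomputable def sNum {H : Type*} [NormedAddCommGroup H] [InnerProductSpace ℂ H]
    (W : H →L[ℂ] H) (n : ℕ) : ℝ :=
  sInf {r : ℝ | ∃ F : H →L[ℂ] H, FiniteDimensional ℂ (LinearMap.range (F : H →ₗ[ℂ] H)) ∧
    Module.finrank ℂ (LinearMap.range (F : H →ₗ[ℂ] H)) < n ∧ r = ‖W - F‖}

section Aux

variable {H : Type*} [NormedAddCommGroup H] [InnerProductSpace ℂ H]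

/-- The defining set of `sNum`. -/
def sNumSet (W : H →L[ℂ] H) (n : ℕ) : Set ℝ :=
  {r : ℝ | ∃ F : H →L[ℂ] H, FiniteDimensional ℂ (LinearMap.range (F : H →ₗ[ℂ] H)) ∧
    Module.finrank ℂ (LinearMap.range (F : H →ₗ[ℂ] H)) < n ∧ r = ‖W - F‖}

lemma sNum_eq (W : H →L[ℂ] H) (n : ℕ) : sNum W n = sInf (sNumSet W n) := rfl

lemma sNumSet_nonempty (W : H →L[ℂ] H) {n : ℕ} (hn : 1 ≤ n) :
    (sNumSet W n).Nonempty := by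
  have h0 : LinearMap.range ((0 : H →L[ℂ] H) : H →ₗ[ℂ] H) = ⊥ := by
    rw [ContinuousLinearMap.coe_zero]; exact LinearMap.range_zero
  refine ⟨‖W‖, 0, ?_, ?_, by simp⟩
  · rw [h0]; infer_instance
  · rw [h0, finrank_bot]; omega

lemma sNumSet_bddBelow (W : H →L[ℂ] H) (n : ℕ) : BddBelow (sNumSet W n) := by
  refine ⟨0, fun r hr => ?_⟩
  obtain ⟨F, _, _, rfl⟩ := hr
  exact norm_nonneg _

lemma sNum_nonneg (W : H →L[ℂ] H) (n : ℕ) : 0 ≤ sNum W n := by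
  rcases Nat.eq_zero_or_pos n with h | h
  · subst h
    have : sNumSet W 0 = ∅ := by
      ext r; simp only [sNumSet, Set.mem_setOf_eq, Set.mem_empty_iff_false, iff_false]
      rintro ⟨F, _, h, _⟩; omega
    rw [sNum_eq, this, Real.sInf_empty]
  · exact le_csInf (sNumSet_nonempty W h) (fun r hr => by
      obtain ⟨F, _, _, rfl⟩ := hr; exact norm_nonneg _)

lemma sNum_le (W F : H →L[ℂ] H) (n : ℕ)
    (h1 : FiniteDimensional ℂ (LinearMap.range (F : H →ₗ[ℂ] H)))
    (h2 : Module.finrank ℂ (LinearMap.range (F : H →ₗ[ℂ] H)) < n) :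
    sNum W n ≤ ‖W - F‖ :=
  csInf_le (sNumSet_bddBelow W n) ⟨F, h1, h2, rfl⟩

lemma sNum_antitone (W : H →L[ℂ] H) {m n : ℕ} (hm : 1 ≤ m) (hmn : m ≤ n) :
    sNum W n ≤ sNum W m := by
  refine csInf_le_csInf (sNumSet_bddBelow W n) (sNumSet_nonempty W hm) ?_
  rintro r ⟨F, h1, h2, rfl⟩
  exact ⟨F, h1, lt_of_lt_of_le h2 hmn, rfl⟩

lemma exists_approx (W : H →L[ℂ] H) {n : ℕ} (hn : 1 ≤ n) {ε : ℝ} (hε : 0 < ε) :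
    ∃ F : H →L[ℂ] H, FiniteDimensional ℂ (LinearMap.range (F : H →ₗ[ℂ] H)) ∧
      Module.finrank ℂ (LinearMap.range (F : H →ₗ[ℂ] H)) < n ∧
      ‖W - F‖ < sNum W n + ε := by
  obtain ⟨r, hr, hlt⟩ := Real.lt_sInf_add_pos (sNumSet_nonempty W hn) hε
  obtain ⟨F, h1, h2, rfl⟩ := hr
  exact ⟨F, h1, h2, hlt⟩

lemma sNum_neg (W : H →L[ℂ] H) (n : ℕ) : sNum (-W) n = sNum W n := by
  have key : ∀ V : H →L[ℂ] H, sNumSet (-V) n ⊆ sNumSet V n := by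
    rintro V r ⟨F, h1, h2, rfl⟩
    refine ⟨-F, ?_, ?_, ?_⟩
    · have : LinearMap.range ((-F : H →L[ℂ] H) : H →ₗ[ℂ] H)
        = LinearMap.range (F : H →ₗ[ℂ] H) := by
        rw [ContinuousLinearMap.coe_neg, LinearMap.range_neg]
      rw [this]; exact h1
    · have : LinearMap.range ((-F : H →L[ℂ] H) : H →ₗ[ℂ] H)
        = LinearMap.range (F : H →ₗ[ℂ] H) := by
        rw [ContinuousLinearMap.coe_neg, LinearMap.range_neg]
      rw [this]; exact h2
    · rw [show V - -F = -(-V - F) by abel, norm_neg]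
  have h1 := key W
  have h2 := key (-W); rw [neg_neg] at h2
  rw [sNum_eq, sNum_eq, le_antisymm h1 h2]

variable [CompleteSpace H]

/-- Additivity of s-numbers: `s_{m+n+1}(A+B) ≤ s_{m+1}(A) + s_{n+1}(B)`. -/
lemma sNum_add_le (A B : H →L[ℂ] H) (m n : ℕ) :
    sNum (A + B) (m + n + 1) ≤ sNum A (m + 1) + sNum B (n + 1) := by
  refine le_of_forall_pos_le_add (fun ε hε => ?_)
  obtain ⟨F, hF1, hF2, hF3⟩ := exists_approx A (Nat.le_add_left 1 m) (half_pos hε)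
  obtain ⟨G, hG1, hG2, hG3⟩ := exists_approx B (Nat.le_add_left 1 n) (half_pos hε)
  have hrange : LinearMap.range ((F + G : H →L[ℂ] H) : H →ₗ[ℂ] H) ≤
      LinearMap.range (F : H →ₗ[ℂ] H) ⊔ LinearMap.range (G : H →ₗ[ℂ] H) := by
    rintro x ⟨y, rfl⟩
    exact Submodule.mem_sup.mpr ⟨F y, ⟨y, rfl⟩, G y, ⟨y, rfl⟩, rfl⟩
  haveI := hF1; haveI := hG1
  haveI : FiniteDimensional ℂ
      (LinearMap.range (F : H →ₗ[ℂ] H) ⊔ LinearMap.range (G : H →ₗ[ℂ] H) : Submodule ℂ H) :=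
    Submodule.finiteDimensional_sup _ _
  haveI : FiniteDimensional ℂ (LinearMap.range ((F + G : H →L[ℂ] H) : H →ₗ[ℂ] H)) :=
    Submodule.finiteDimensional_of_le hrange
  have hrk : Module.finrank ℂ (LinearMap.range ((F + G : H →L[ℂ] H) : H →ₗ[ℂ] H)) < m + n + 1 := by
    have h1 := Submodule.finrank_mono hrange
    have h2 : Module.finrank ℂ
        (LinearMap.range (F : H →ₗ[ℂ] H) ⊔ LinearMap.range (G : H →ₗ[ℂ] H) : Submodule ℂ H) ≤
        Module.finrank ℂ (LinearMap.range (F : H →ₗ[ℂ] H)) +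
        Module.finrank ℂ (LinearMap.range (G : H →ₗ[ℂ] H)) := by
      have := Submodule.finrank_sup_add_finrank_inf_eq
        (LinearMap.range (F : H →ₗ[ℂ] H)) (LinearMap.range (G : H →ₗ[ℂ] H))
      omega
    omega
  calc sNum (A + B) (m + n + 1) ≤ ‖(A + B) - (F + G)‖ := sNum_le _ _ _ inferInstance hrk
    _ ≤ ‖A - F‖ + ‖B - G‖ := by
        rw [show (A + B) - (F + G) = (A - F) + (B - G) by abel]
        exact norm_add_le _ _
    _ ≤ sNum A (m + 1) + sNum B (n + 1) + ε := by
        have := hF3.le; have := hG3.le; linarith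

/-- Multiplicativity of s-numbers: `s_{m+n+1}(A∘B) ≤ s_{m+1}(A) * s_{n+1}(B)`. -/
lemma sNum_comp_le (A B : H →L[ℂ] H) (m n : ℕ) :
    sNum (A ∘L B) (m + n + 1) ≤ sNum A (m + 1) * sNum B (n + 1) := by
  set a := sNum A (m + 1) with ha
  set b := sNum B (n + 1) with hb
  have ha0 : 0 ≤ a := sNum_nonneg A (m + 1)
  have hb0 : 0 ≤ b := sNum_nonneg B (n + 1)
  refine le_of_forall_pos_le_add (fun ε hε => ?_)
  set δ : ℝ := min 1 (ε / (a + b + 1)) with hδdef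
  have habs : 0 < a + b + 1 := by linarith
  have hδ : 0 < δ := lt_min one_pos (div_pos hε habs)
  have hδ1 : δ ≤ 1 := min_le_left _ _
  have hδ2 : δ * (a + b + 1) ≤ ε := by
    calc δ * (a + b + 1) ≤ (ε / (a + b + 1)) * (a + b + 1) := by
          exact mul_le_mul_of_nonneg_right (min_le_right _ _) habs.le
      _ = ε := div_mul_cancel₀ ε habs.ne'
  obtain ⟨F, hF1, hF2, hF3⟩ := exists_approx A (Nat.le_add_left 1 m) hδ
  obtain ⟨G, hG1, hG2, hG3⟩ := exists_approx B (Nat.le_add_left 1 n) hδ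
  -- the finite-rank approximant of A∘B
  set K : H →L[ℂ] H := F ∘L B + (A - F) ∘L G with hK
  have hdiff : A ∘L B - K = (A - F) ∘L (B - G) := by
    ext x
    simp [hK, ContinuousLinearMap.comp_apply, ContinuousLinearMap.sub_apply,
      ContinuousLinearMap.add_apply, map_sub]
    abel
  haveI := hF1; haveI := hG1
  have hr1 : LinearMap.range ((F ∘L B : H →L[ℂ] H) : H →ₗ[ℂ] H) ≤
      LinearMap.range (F : H →ₗ[ℂ] H) := by
    rintro x ⟨y, rfl⟩; exact ⟨B y, rfl⟩
  have hr2 : LinearMap.range (((A - F) ∘L G : H →L[ℂ] H) : H →ₗ[ℂ] H) ≤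
      (LinearMap.range (G : H →ₗ[ℂ] H)).map ((A - F : H →L[ℂ] H) : H →ₗ[ℂ] H) := by
    rintro x ⟨y, rfl⟩; exact ⟨G y, ⟨y, rfl⟩, rfl⟩
  haveI : FiniteDimensional ℂ
      ((LinearMap.range (G : H →ₗ[ℂ] H)).map ((A - F : H →L[ℂ] H) : H →ₗ[ℂ] H)) :=
    Module.Finite.map _ _
  haveI f1 : FiniteDimensional ℂ (LinearMap.range ((F ∘L B : H →L[ℂ] H) : H →ₗ[ℂ] H)) :=
    Submodule.finiteDimensional_of_le hr1
  haveI f2 : FiniteDimensional ℂ (LinearMap.range (((A - F) ∘L G : H →L[ℂ] H) : H →ₗ[ℂ] H)) :=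
    Submodule.finiteDimensional_of_le hr2
  have hrangeK : LinearMap.range (K : H →ₗ[ℂ] H) ≤
      LinearMap.range ((F ∘L B : H →L[ℂ] H) : H →ₗ[ℂ] H) ⊔
      LinearMap.range (((A - F) ∘L G : H →L[ℂ] H) : H →ₗ[ℂ] H) := by
    rintro x ⟨y, rfl⟩
    exact Submodule.mem_sup.mpr ⟨(F ∘L B) y, ⟨y, rfl⟩, ((A - F) ∘L G) y, ⟨y, rfl⟩, rfl⟩
  haveI : FiniteDimensional ℂ
      ((LinearMap.range ((F ∘L B : H →L[ℂ] H) : H →ₗ[ℂ] H) ⊔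
        LinearMap.range (((A - F) ∘L G : H →L[ℂ] H) : H →ₗ[ℂ] H) : Submodule ℂ H)) :=
    Submodule.finiteDimensional_sup _ _
  haveI : FiniteDimensional ℂ (LinearMap.range (K : H →ₗ[ℂ] H)) :=
    Submodule.finiteDimensional_of_le hrangeK
  have hrkK : Module.finrank ℂ (LinearMap.range (K : H →ₗ[ℂ] H)) < m + n + 1 := by
    have h1 := Submodule.finrank_mono hrangeK
    have h2 := Submodule.finrank_sup_add_finrank_inf_eq
      (LinearMap.range ((F ∘L B : H →L[ℂ] H) : H →ₗ[ℂ] H))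
      (LinearMap.range (((A - F) ∘L G : H →L[ℂ] H) : H →ₗ[ℂ] H))
    have h3 : Module.finrank ℂ (LinearMap.range ((F ∘L B : H →L[ℂ] H) : H →ₗ[ℂ] H)) ≤
        Module.finrank ℂ (LinearMap.range (F : H →ₗ[ℂ] H)) :=
      Submodule.finrank_mono hr1
    have h4 : Module.finrank ℂ (LinearMap.range (((A - F) ∘L G : H →L[ℂ] H) : H →ₗ[ℂ] H)) ≤
        Module.finrank ℂ (LinearMap.range (G : H →ₗ[ℂ] H)) :=
      le_trans (Submodule.finrank_mono hr2) (Submodule.finrank_map_le _ _)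
    omega
  have hnorm : ‖A ∘L B - K‖ ≤ ‖A - F‖ * ‖B - G‖ := by
    rw [hdiff]; exact ContinuousLinearMap.opNorm_comp_le _ _
  have hFn : 0 ≤ ‖A - F‖ := norm_nonneg _
  have hGn : 0 ≤ ‖B - G‖ := norm_nonneg _
  calc sNum (A ∘L B) (m + n + 1) ≤ ‖A ∘L B - K‖ := sNum_le _ _ _ inferInstance hrkK
    _ ≤ ‖A - F‖ * ‖B - G‖ := hnorm
    _ ≤ (a + δ) * (b + δ) := by
        exact mul_le_mul hF3.le hG3.le hGn (by linarith)
    _ = a * b + δ * (a + b) + δ * δ := by ring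
    _ ≤ a * b + δ * (a + b) + δ * 1 := by nlinarith
    _ = a * b + δ * (a + b + 1) := by ring
    _ ≤ a * b + ε := by linarith

/-- Summation lemma: `s_{k·2r+1}(∑_{i=1}^k T_i) ≤ ∑_{i=1}^k s_{2r+1}(T_i)`. -/
lemma sNum_finsum_le (T : ℕ → H →L[ℂ] H) (r : ℕ) :
    ∀ k, 1 ≤ k →
      sNum (∑ i ∈ Finset.Icc 1 k, T i) (k * (2 * r) + 1) ≤
        ∑ i ∈ Finset.Icc 1 k, sNum (T i) (2 * r + 1) := by
  intro k
  induction k with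
  | zero => omega
  | succ k ih =>
    intro _
    rcases Nat.eq_zero_or_pos k with hk0 | hk1
    · subst hk0; simp
    · rw [Finset.sum_Icc_succ_top (by omega : 1 ≤ k + 1),
        Finset.sum_Icc_succ_top (by omega : 1 ≤ k + 1)]
      have key := sNum_add_le (∑ i ∈ Finset.Icc 1 k, T i) (T (k + 1)) (k * (2 * r)) (2 * r)
      have hidx : k * (2 * r) + 2 * r + 1 = (k + 1) * (2 * r) + 1 := by ring
      rw [hidx] at key
      calc sNum ((∑ i ∈ Finset.Icc 1 k, T i) + T (k + 1)) ((k + 1) * (2 * r) + 1)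
          ≤ sNum (∑ i ∈ Finset.Icc 1 k, T i) (k * (2 * r) + 1) + sNum (T (k + 1)) (2 * r + 1) :=
            key
        _ ≤ (∑ i ∈ Finset.Icc 1 k, sNum (T i) (2 * r + 1)) + sNum (T (k + 1)) (2 * r + 1) := by
            linarith [ih hk1]

/-- The main inequality, without any compactness assumptions. -/
lemma sNum_main (k : ℕ) (hk : 1 ≤ k) (C Z : ℕ → H →L[ℂ] H) (m : ℕ) (hm : 1 ≤ m) :
    sNum (∑ i ∈ Finset.Icc 1 k, C i ∘L Z i) m ≤
      ∑ i ∈ Finset.Icc 1 k,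
        sNum (C i) ⌈(m : ℝ) / (2 * k)⌉₊ * sNum (Z i) ⌈(m : ℝ) / (2 * k)⌉₊ := by
  set p : ℕ := ⌈(m : ℝ) / (2 * k)⌉₊ with hp
  have hk0 : (0 : ℝ) < 2 * k := by positivity
  have hp1 : 1 ≤ p := by
    rw [hp]
    exact Nat.one_le_iff_ne_zero.mpr (by
      have : (0 : ℝ) < (m : ℝ) / (2 * k) := by positivity
      exact Nat.ceil_pos.mpr this |>.ne')
  set r : ℕ := p - 1 with hr
  have hpr : p = r + 1 := by omega
  have hmge : 2 * k * r + 1 ≤ m := by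
    have h1 : (r : ℕ) < p := by omega
    have h2 : (r : ℝ) < (m : ℝ) / (2 * k) := by
      have := Nat.lt_ceil.mp (hp ▸ h1)
      exact this
    have h3 : (r : ℝ) * (2 * k) < m := by
      rw [lt_div_iff₀ hk0] at h2; exact h2
    have h4 : 2 * k * r < m := by
      have : ((2 * k * r : ℕ) : ℝ) < (m : ℝ) := by push_cast; linarith
      exact_mod_cast this
    omega
  have step1 : sNum (∑ i ∈ Finset.Icc 1 k, C i ∘L Z i) m ≤
      sNum (∑ i ∈ Finset.Icc 1 k, C i ∘L Z i) (k * (2 * r) + 1) := by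
    apply sNum_antitone _ (Nat.le_add_left 1 _)
    calc k * (2 * r) + 1 = 2 * k * r + 1 := by ring_nf
      _ ≤ m := hmge
  have step2 := sNum_finsum_le (fun i => C i ∘L Z i) r k hk
  have step3 : ∀ i, sNum (C i ∘L Z i) (2 * r + 1) ≤ sNum (C i) p * sNum (Z i) p := by
    intro i
    have := sNum_comp_le (C i) (Z i) r r
    rw [show r + r + 1 = 2 * r + 1 by ring, ← hpr] at this
    exact this
  calc sNum (∑ i ∈ Finset.Icc 1 k, C i ∘L Z i) m
      ≤ sNum (∑ i ∈ Finset.Icc 1 k, C i ∘L Z i) (k * (2 * r) + 1) := step1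
    _ ≤ ∑ i ∈ Finset.Icc 1 k, sNum (C i ∘L Z i) (2 * r + 1) := step2
    _ ≤ ∑ i ∈ Finset.Icc 1 k, sNum (C i) p * sNum (Z i) p :=
        Finset.sum_le_sum (fun i _ => step3 i)

end Aux

/-- If `T = ∑_{i=1}^k C i ∘ Z i` with all `C i`, `Z i` compact, then for all
`m ≥ 1`, `s m (T) ≤ ∑_{i=1}^k s ⌈m/(2k)⌉ (C i) * s ⌈m/(2k)⌉ (Z i)`.  In particular, if
`T = CZ - ZC` with `C, Z` compact, then `s m (T) ≤ 2 * s ⌈m/4⌉ (C) * s ⌈m/4⌉ (Z)`. -/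
theorem sNum_sum_of_products
    {H : Type*} [NormedAddCommGroup H] [InnerProductSpace ℂ H] [CompleteSpace H]
    (k : ℕ) (hk : 1 ≤ k) (C Z : ℕ → H →L[ℂ] H)
    (hC : ∀ i, 1 ≤ i → i ≤ k → IsCompactOperator (⇑(C i)))
    (hZ : ∀ i, 1 ≤ i → i ≤ k → IsCompactOperator (⇑(Z i))) :
    (∀ m, 1 ≤ m →
      sNum (∑ i ∈ Finset.Icc 1 k, C i ∘L Z i) m ≤
        ∑ i ∈ Finset.Icc 1 k,
          sNum (C i) ⌈(m : ℝ) / (2 * k)⌉₊ * sNum (Z i) ⌈(m : ℝ) / (2 * k)⌉₊) ∧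
    (∀ C' Z' : H →L[ℂ] H, IsCompactOperator (⇑C') → IsCompactOperator (⇑Z') →
      ∀ m, 1 ≤ m →
        sNum (C' ∘L Z' - Z' ∘L C') m ≤
          2 * (sNum C' ⌈(m : ℝ) / 4⌉₊ * sNum Z' ⌈(m : ℝ) / 4⌉₊)) := by
  constructor
  · exact fun m hm => sNum_main k hk C Z m hm
  · intro C' Z' _ _ m hm
    -- apply the main lemma with k = 2, C = [C', Z'], Z = [Z', -C']
    set Cf : ℕ → H →L[ℂ] H := fun i => if i = 1 then C' else Z' with hCf
    set Zf : ℕ → H →L[ℂ] H := fun i => if i = 1 then Z' else -C' with hZf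
    have key := sNum_main 2 (by norm_num) Cf Zf m hm
    have hIcc : Finset.Icc 1 2 = {1, 2} := rfl
    have hsum : ∑ i ∈ Finset.Icc 1 2, Cf i ∘L Zf i = C' ∘L Z' - Z' ∘L C' := by
      rw [hIcc, Finset.sum_pair (by norm_num : (1 : ℕ) ≠ 2)]
      simp only [hCf, hZf]
      norm_num
      ext x
      simp [sub_eq_add_neg]
    have hfour : (2 * (2 : ℕ) : ℝ) = 4 := by norm_cast
    rw [hsum] at key
    set p : ℕ := ⌈(m : ℝ) / 4⌉₊ with hp
    have hceil : ⌈(m : ℝ) / (2 * ((2 : ℕ) : ℝ))⌉₊ = p := by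
      rw [hp]; norm_num
    rw [hceil] at key
    have hrhs : ∑ i ∈ Finset.Icc 1 2, sNum (Cf i) p * sNum (Zf i) p
        = 2 * (sNum C' p * sNum Z' p) := by
      rw [hIcc, Finset.sum_pair (by norm_num : (1 : ℕ) ≠ 2)]
      simp only [hCf, hZf]
      norm_num [sNum_neg]
      ring
    rw [hrhs] at key
    exact key
end
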